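/- Let p be an odd prime and r a prime with r ≡ 3 (mod 4) and (p|r) = 1. Then the set of primes q with (p|q) = -1 and (q|r) = -1 is infinite. -/

import Mathlib

theorem stmt_17 (p r : ℕ) (hp : p.Prime) (hpodd : Odd p)
    (hr : r.Prime) (hr4 : r % 4 = 3) (hpr : p ≠ r)
    (hleg : IsSquare (p : ZMod r)) :
    {q : ℕ | q.Prime ∧ q ≠ p ∧ ¬ IsSquare (p : ZMod q) ∧ ¬ IsSquare (q : ZMod r)}.Infinite := by
  haveI : Fact p.Prime := ⟨hp⟩
  haveI : Fact r.Prime := ⟨hr⟩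
  have hrodd : Odd r := by rw [Nat.odd_iff]; omega
  have hp2 : p ≠ 2 := by rintro rfl; simp [Nat.odd_iff] at hpodd
  have hr2 : r ≠ 2 := by rintro rfl; norm_num at hr4
  -- nonsquares mod p and mod r
  obtain ⟨n, hn⟩ := FiniteField.exists_nonsquare (F := ZMod p)
    (by rw [ZMod.ringChar_zmod_n]; exact hp2)
  obtain ⟨m, hm⟩ := FiniteField.exists_nonsquare (F := ZMod r)
    (by rw [ZMod.ringChar_zmod_n]; exact hr2)
  have hn0 : n ≠ 0 := fun h => hn (h ▸ IsSquare.zero)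
  have hm0 : m ≠ 0 := fun h => hm (h ▸ IsSquare.zero)
  -- coprimality
  have hcpr : Nat.Coprime p r := (Nat.coprime_primes hp hr).mpr hpr
  have hc4p : Nat.Coprime 4 p := by
    have : Nat.Coprime (2 ^ 2) p := Nat.Coprime.pow_left _ (Nat.coprime_two_left.mpr hpodd)
    norm_num at this; exact this
  have hc4r : Nat.Coprime 4 r := by
    have : Nat.Coprime (2 ^ 2) r := Nat.Coprime.pow_left _ (Nat.coprime_two_left.mpr hrodd)
    norm_num at this; exact this
  have hc : Nat.Coprime 4 (p * r) := Nat.Coprime.mul_right hc4p hc4r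
  have e2 := ZMod.chineseRemainder hcpr
  have e := ZMod.chineseRemainder hc
  haveI : NeZero (4 * (p * r)) :=
    ⟨Nat.mul_ne_zero (by norm_num) (Nat.mul_ne_zero hp.pos.ne' hr.pos.ne')⟩
  set a : ZMod (4 * (p * r)) := e.symm (1, e2.symm (n, m)) with ha
  have haunit : IsUnit a := by
    apply IsUnit.map (e.symm : ZMod 4 × ZMod (p * r) →* ZMod (4 * (p * r)))
    refine isUnit_iff_exists_inv.mpr ⟨(1, e2.symm (n⁻¹, m⁻¹)), ?_⟩
    rw [Prod.mk_mul_mk, one_mul, ← map_mul, Prod.mk_mul_mk,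
      mul_inv_cancel₀ hn0, mul_inv_cancel₀ hm0]
    simp
  have key : {q : ℕ | q.Prime ∧ (q : ZMod (4 * (p * r))) = a} ⊆
      {q : ℕ | q.Prime ∧ q ≠ p ∧ ¬ IsSquare (p : ZMod q) ∧ ¬ IsSquare (q : ZMod r)} := by
    rintro q ⟨hq, hqa⟩
    have hq4 : (q : ZMod 4) = 1 ∧ ((q : ZMod p) = n ∧ (q : ZMod r) = m) := by
      have h1 : e (q : ZMod (4 * (p * r))) = (1, e2.symm (n, m)) := by
        rw [hqa, ha, RingEquiv.apply_symm_apply]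
      rw [map_natCast] at h1
      obtain ⟨h14, h1pr⟩ := Prod.mk.injEq .. ▸ h1
      have h2 : e2 (q : ZMod (p * r)) = (n, m) := by
        rw [h1pr, RingEquiv.apply_symm_apply]
      rw [map_natCast] at h2
      exact ⟨h14, Prod.mk.injEq .. ▸ h2⟩
    obtain ⟨h4, hqp, hqr⟩ := hq4
    have hq41 : q % 4 = 1 := by
      have := (ZMod.natCast_eq_natCast_iff' q 1 4).mp (by rw [h4]; norm_num)
      simpa using this
    have hq2 : q ≠ 2 := by omega
    haveI : Fact q.Prime := ⟨hq⟩
    have hqnep : q ≠ p := by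
      rintro rfl
      rw [ZMod.natCast_self] at hqp
      exact hn0 hqp.symm
    refine ⟨hq, hqnep, ?_, ?_⟩
    · -- ¬ IsSquare (p : ZMod q) via reciprocity
      rw [← legendreSym.eq_neg_one_iff' (p := q)]
      rw [← legendreSym.quadratic_reciprocity_one_mod_four hq41 hp2]
      rw [legendreSym.eq_neg_one_iff']
      rw [hqp]; exact hn
    · rw [← hqr] at hm; exact hm
  exact Set.Infinite.mono key (Nat.infinite_setOf_prime_and_eq_mod haunit)
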